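/- The system $p(r_2, r_3) = 0$ and $\frac{\partial p}{\partial r_3}(r_2, r_3) = 0$, where $p$ is Euler's quintic $p(r_2,r_3) = -r_2^5 + 2r_2^4 r_3 - 2r_2^4 - r_2^3 r_3^2 + 4r_2^3 r_3 - r_2^3 + r_2^2 r_3^3 - r_2^2 r_3^2 + r_2^2 r_3 - r_2^2 - 2r_2 r_3^4 - 4r_2 r_3^3 - 5r_2 r_3^2 - 4r_2 r_3 - 2r_2 + r_3^5 + 2r_3^4 + r_3^3 - r_3^2 - 2r_3 - 1$ and $\frac{\partial p}{\partial r_3} = 2r_2^4 - 2r_2^3 r_3 + 4r_2^3 + 3r_2^2 r_3^2 - 2r_2^2 r_3 + r_2^2 - 8r_2 r_3^3 - 12r_2 r_3^2 - 10r_2 r_3 - 4r_2 + 5r_3^4 + 8r_3^3 + 3r_3^2 - 2r_3 - 2$, has no real solution $(r_2, r_3)$ with $r_2 \geq 0$ and $r_3 > 0$. -/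
import Mathlib


/-- Euler's quintic. -/
def eulerP (r2 r3 : ℝ) : ℝ :=
  -r2^5 + 2*r2^4*r3 - 2*r2^4 - r2^3*r3^2 + 4*r2^3*r3 - r2^3 + r2^2*r3^3 - r2^2*r3^2
    + r2^2*r3 - r2^2 - 2*r2*r3^4 - 4*r2*r3^3 - 5*r2*r3^2 - 4*r2*r3 - 2*r2
    + r3^5 + 2*r3^4 + r3^3 - r3^2 - 2*r3 - 1

/-- The partial derivative of Euler's quintic with respect to `r3`. -/
def eulerPdr3 (r2 r3 : ℝ) : ℝ :=
  2*r2^4 - 2*r2^3*r3 + 4*r2^3 + 3*r2^2*r3^2 - 2*r2^2*r3 + r2^2 - 8*r2*r3^3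
    - 12*r2*r3^2 - 10*r2*r3 - 4*r2 + 5*r3^4 + 8*r3^3 + 3*r3^2 - 2*r3 - 2

/-- the system `p = 0`, `∂p/∂r3 = 0` has no solution with `r2 ≥ 0`, `r3 > 0`. -/
theorem euler_quintic_no_critical_points :
    ¬ ∃ r2 r3 : ℝ, 0 ≤ r2 ∧ 0 < r3 ∧ eulerP r2 r3 = 0 ∧ eulerPdr3 r2 r3 = 0 := by
  rintro ⟨r2, r3, hr2, hr3, hp, hq⟩
  simp only [eulerP] at hp
  simp only [eulerPdr3] at hq
  -- the resultant identity: A*p + B*q = r2 * S(r2)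
  have hR : r2 * ((864) + (8721)*r2^1 + (33480)*r2^2 + (42968)*r2^3 + (-85512)*r2^4 + (-314580)*r2^5 + (235592)*r2^6 + (3392136)*r2^7 + (10116216)*r2^8 + (18111126)*r2^9 + (22594968)*r2^10 + (20633256)*r2^11 + (13994792)*r2^12 + (7009548)*r2^13 + (2528088)*r2^14 + (622712)*r2^15 + (93960)*r2^16 + (6561)*r2^17) = 0 := by
    linear_combination ((-432) + (-2142)*r2^1 + (2847)*r2^2 + (41109)*r2^3 + (89401)*r2^4 + (-76697)*r2^5 + (-798588)*r2^6 + (-2018086)*r2^7 + (-2999398)*r2^8 + (-2990280)*r2^9 + (-2072705)*r2^10 + (-994511)*r2^11 + (-317283)*r2^12 + (-60897)*r2^13 + (-5346)*r2^14 + (-234)*r2^1*r3^1 + (7506)*r2^2*r3^1 + (63060)*r2^3*r3^1 + (189882)*r2^4*r3^1 + (223410)*r2^5*r3^1 + (-140604)*r2^6*r3^1 + (-849240)*r2^7*r3^1 + (-1318908)*r2^8*r3^1 + (-1140438)*r2^9*r3^1 + (-598230)*r2^10*r3^1 + (-184380)*r2^11*r3^1 + (-28926)*r2^12*r3^1 +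 (-1458)*r2^13*r3^1 + (648)*r3^2 + (-2241)*r2^1*r3^2 + (-28989)*r2^2*r3^2 + (-62321)*r2^3*r3^2 + (55135)*r2^4*r3^2 + (454782)*r2^5*r3^2 + (859910)*r2^6*r3^2 + (792374)*r2^7*r3^2 + (296094)*r2^8*r3^2 + (-102365)*r2^9*r3^2 + (-157001)*r2^10*r3^2 + (-63909)*r2^11*r3^2 + (-9477)*r2^12*r3^2 + (1080)*r3^3 + (2520)*r2^1*r3^3 + (-16620)*r2^2*r3^3 + (-85080)*r2^3*r3^3 + (-134880)*r2^4*r3^3 + (11040)*r2^5*r3^3 + (364440)*r2^6*r3^3 + (624480)*r2^7*r3^3 + (550920)*r2^8*r3^3 + (282120)*r2^9*r3^3 + (79860)*r2^10*r3^3 + (9720)*r2^11*r3^3) * hp + ((216) + (639)*r2^1 + (-4596)*r2^2 + (-28911)*r2^3 + (-50196)*r2^4 + (49467)*r2^5 + (379800)*r2^6 + (776781)*r2^7 + (834480)*r2^8 + (405261)*r2^9 + (-143172)*r2^10 + (-380589)*r2^11 + (-288948)*r2^12 + (-119559)*r2^13 + (-27168)*r2^14 + (-2673)*r2^15 + (216)*r3^1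 + (972)*r2^1*r3^1 + (-2949)*r2^2*r3^1 + (-29805)*r2^3*r3^1 + (-77545)*r2^4*r3^1 + (-44353)*r2^5*r3^1 + (234126)*r2^6*r3^1 + (738214)*r2^7*r3^1 + (1144894)*r2^8*r3^1 + (1140834)*r2^9*r3^1 + (778271)*r2^10*r3^1 + (366119)*r2^11*r3^1 + (114963)*r2^12*r3^1 + (21939)*r2^13*r3^1 + (1944)*r2^14*r3^1 + (468)*r2^1*r3^2 + (54)*r2^2*r3^2 + (-14972)*r2^3*r3^2 + (-60090)*r2^4*r3^2 + (-88840)*r2^5*r3^2 + (7436)*r2^6*r3^2 + (229080)*r2^7*r3^2 + (387388)*r2^8*r3^2 + (338740)*r2^9*r3^2 + (172350)*r2^10*r3^2 + (48548)*r2^11*r3^2 + (5886)*r2^12*r3^2 + (-216)*r3^3 + (333)*r2^1*r3^3 + (7329)*r2^2*r3^3 + (17941)*r2^3*r3^3 + (-7043)*r2^4*r3^3 + (-102630)*r2^5*r3^3 + (-200254)*r2^6*r3^3 + (-179278)*r2^7*r3^3 + (-53334)*r2^8*r3^3 + (41977)*r2^9*r3^3 + (47581)*r2^10*r3^3 + (18393)*r2^11*r3^3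 + (2673)*r2^12*r3^3 + (-216)*r3^4 + (-504)*r2^1*r3^4 + (3324)*r2^2*r3^4 + (17016)*r2^3*r3^4 + (26976)*r2^4*r3^4 + (-2208)*r2^5*r3^4 + (-72888)*r2^6*r3^4 + (-124896)*r2^7*r3^4 + (-110184)*r2^8*r3^4 + (-56424)*r2^9*r3^4 + (-15972)*r2^10*r3^4 + (-1944)*r2^11*r3^4) * hq
  -- S(r2) > 0 for r2 ≥ 0, via S(x)*(1+x)^10 having positive coefficients
  have hT : (0:ℝ) < (864) + (17361)*r2^1 + (159570)*r2^2 + (873893)*r2^3 + (3078728)*r2^4 + (6830598)*r2^5 + (7807844)*r2^6 + (725846)*r2^7 + (17876232)*r2^8 + (226021587)*r2^9 + (1024985742)*r2^10 + (2973201111)*r2^11 + (6397999504)*r2^12 + (10865124388)*r2^13 + (15026158968)*r2^14 + (17219593828)*r2^15 + (16507382704)*r2^16 + (13294966311)*r2^17 + (8999221902)*r2^18 + (5103355587)*r2^19 + (2408179752)*r2^20 + (935206646)*r2^21 + (293964644)*r2^22 + (72965478)*r2^23 + (13770728)*r2^24 + (1857557)*r2^25 + (159570)*r2^26 + (6561)*r2^27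 := by
    linarith [pow_nonneg hr2 1, pow_nonneg hr2 2, pow_nonneg hr2 3, pow_nonneg hr2 4, pow_nonneg hr2 5, pow_nonneg hr2 6, pow_nonneg hr2 7, pow_nonneg hr2 8, pow_nonneg hr2 9, pow_nonneg hr2 10, pow_nonneg hr2 11, pow_nonneg hr2 12, pow_nonneg hr2 13, pow_nonneg hr2 14, pow_nonneg hr2 15, pow_nonneg hr2 16, pow_nonneg hr2 17, pow_nonneg hr2 18, pow_nonneg hr2 19, pow_nonneg hr2 20, pow_nonneg hr2 21, pow_nonneg hr2 22, pow_nonneg hr2 23, pow_nonneg hr2 24, pow_nonneg hr2 25, pow_nonneg hr2 26, pow_nonneg hr2 27]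
  have h10 : (0:ℝ) < (1 + r2)^10 := by positivity
  have hmul : ((864) + (8721)*r2^1 + (33480)*r2^2 + (42968)*r2^3 + (-85512)*r2^4 + (-314580)*r2^5 + (235592)*r2^6 + (3392136)*r2^7 + (10116216)*r2^8 + (18111126)*r2^9 + (22594968)*r2^10 + (20633256)*r2^11 + (13994792)*r2^12 + (7009548)*r2^13 + (2528088)*r2^14 + (622712)*r2^15 + (93960)*r2^16 + (6561)*r2^17) * (1 + r2)^10 = (864) + (17361)*r2^1 + (159570)*r2^2 + (873893)*r2^3 + (3078728)*r2^4 + (6830598)*r2^5 + (7807844)*r2^6 + (725846)*r2^7 + (17876232)*r2^8 + (226021587)*r2^9 + (1024985742)*r2^10 + (2973201111)*r2^11 + (6397999504)*r2^12 + (10865124388)*r2^13 + (15026158968)*r2^14 + (17219593828)*r2^15 + (16507382704)*r2^16 + (13294966311)*r2^17 + (8999221902)*r2^18 + (5103355587)*r2^19 + (2408179752)*r2^20 + (935206646)*r2^21 + (293964644)*r2^22 + (72965478)*r2^23 + (13770728)*r2^24 + (1857557)*r2^25 + (159570)*r2^26 + (6561)*r2^27 := by ring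
  have hS : (0:ℝ) < (864) + (8721)*r2^1 + (33480)*r2^2 + (42968)*r2^3 + (-85512)*r2^4 + (-314580)*r2^5 + (235592)*r2^6 + (3392136)*r2^7 + (10116216)*r2^8 + (18111126)*r2^9 + (22594968)*r2^10 + (20633256)*r2^11 + (13994792)*r2^12 + (7009548)*r2^13 + (2528088)*r2^14 + (622712)*r2^15 + (93960)*r2^16 + (6561)*r2^17 := by nlinarith [hT, h10, hmul]
  have hr20 : r2 = 0 := by
    rcases mul_eq_zero.mp hR with h | h
    · exact h
    · linarith
  subst hr20
  have key : (-96:ℝ) * (1 + r3) = 0 := by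
    linear_combination (120 - 88*r3 + 20*r3^2) * hp + (-12 - 16*r3 + 16*r3^2 - 4*r3^3) * hq
  linarith
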